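/- Let V be a finite type and A : Matrix V V ℕ. Suppose that for all v, w ∈ V there exists m ≥ 1 with (A^m) v w > 0 (E is strongly connected), and that every vertex v has period 1, i.e. any natural number dividing every element of S(v) = {m ≥ 1 : (A^m) v v > 0} divides 1. Then there exists n ≥ 1 such that every entry of A^n is positive (E is n-connected). -/

import Mathlib

private theorem step_pos {V : Type*} [Fintype V] [DecidableEq V] (A : Matrix V V ℕ)
    (p q : ℕ) (v u w : V) (hp : 0 < (A ^ p) v u) (hq : 0 < (A ^ q) u w) :
    0 < (A ^ (p + q)) v w := by
  rw [pow_add, Matrix.mul_apply]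
  calc 0 < (A ^ p) v u * (A ^ q) u w := Nat.mul_pos hp hq
    _ ≤ _ := Finset.single_le_sum (f := fun j => (A ^ p) v j * (A ^ q) j w)
      (fun i _ => Nat.zero_le _) (Finset.mem_univ u)

private theorem closure_pos {V : Type*} [Fintype V] [DecidableEq V] (A : Matrix V V ℕ)
    (v : V) (x : ℕ) (hx : x ∈ AddSubmonoid.closure {m : ℕ | 1 ≤ m ∧ 0 < (A ^ m) v v}) :
    0 < (A ^ x) v v := by
  induction hx using AddSubmonoid.closure_induction with
  | mem m hm => exact hm.2
  | zero => simp [Matrix.one_apply_eq]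
  | add a b _ _ ha hb => exact step_pos A a b v v v ha hb

private theorem exists_consecutive {V : Type*} [Fintype V] [DecidableEq V] (A : Matrix V V ℕ)
    (v : V) (hper : ∀ k : ℕ, (∀ m : ℕ, 1 ≤ m → 0 < (A ^ m) v v → k ∣ m) → k ∣ 1) :
    ∃ y : ℕ, y ∈ AddSubmonoid.closure {m : ℕ | 1 ≤ m ∧ 0 < (A ^ m) v v} ∧
      y + 1 ∈ AddSubmonoid.closure {m : ℕ | 1 ≤ m ∧ 0 < (A ^ m) v v} := by
  set S : Set ℕ := {m : ℕ | 1 ≤ m ∧ 0 < (A ^ m) v v} with hS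
  set C := AddSubmonoid.closure S with hC
  set H : AddSubgroup ℤ := AddSubgroup.closure ((Nat.cast : ℕ → ℤ) '' S) with hH
  obtain ⟨g, hg⟩ := Int.subgroup_cyclic H
  have hdvd : ∀ m : ℕ, m ∈ S → g ∣ (m : ℤ) := by
    intro m hm
    have : (m : ℤ) ∈ H := AddSubgroup.subset_closure ⟨m, hm, rfl⟩
    rw [hg, AddSubgroup.mem_closure_singleton] at this
    obtain ⟨n, hn⟩ := this
    exact ⟨n, by rw [← hn, smul_eq_mul]; ring⟩
  have hone : g.natAbs ∣ 1 := by
    apply hper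
    intro m hm1 hm2
    have := hdvd m ⟨hm1, hm2⟩
    simpa using Int.natAbs_dvd_natAbs.mpr this
  have h1H : (1 : ℤ) ∈ H := by
    have h : g.natAbs = 1 := Nat.dvd_one.mp hone
    rw [hg]
    rcases Int.natAbs_eq_iff.mp h with h' | h'
    · rw [h']; exact AddSubgroup.mem_closure_singleton.mpr ⟨1, by simp⟩
    · rw [h']; exact AddSubgroup.mem_closure_singleton.mpr ⟨-1, by simp⟩
  -- every element of H is a difference of two elements of C
  have key : ∀ z : ℤ, z ∈ H → ∃ a b : ℕ, a ∈ C ∧ b ∈ C ∧ (a : ℤ) - b = z := by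
    intro z hz
    induction hz using AddSubgroup.closure_induction with
    | mem s hs =>
      obtain ⟨m, hm, rfl⟩ := hs
      exact ⟨m, 0, AddSubmonoid.subset_closure hm, zero_mem _, by simp⟩
    | zero => exact ⟨0, 0, zero_mem _, zero_mem _, by simp⟩
    | add a b _ _ ha hb =>
      obtain ⟨a1, b1, ha1, hb1, e1⟩ := ha
      obtain ⟨a2, b2, ha2, hb2, e2⟩ := hb
      exact ⟨a1 + a2, b1 + b2, add_mem ha1 ha2, add_mem hb1 hb2, by push_cast; linarith⟩
    | neg a _ ha =>
      obtain ⟨a1, b1, ha1, hb1, e1⟩ := ha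
      exact ⟨b1, a1, hb1, ha1, by linarith⟩
  obtain ⟨a, b, haC, hbC, hab⟩ := key 1 h1H
  have : a = b + 1 := by omega
  exact ⟨b, hbC, this ▸ haC⟩

private theorem eventually_diag {V : Type*} [Fintype V] [DecidableEq V] (A : Matrix V V ℕ)
    (v : V) (hper : ∀ k : ℕ, (∀ m : ℕ, 1 ≤ m → 0 < (A ^ m) v v → k ∣ m) → k ∣ 1) :
    ∃ N : ℕ, ∀ n : ℕ, N ≤ n → 0 < (A ^ n) v v := by
  obtain ⟨y, hy, hy1⟩ := exists_consecutive A v hper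
  refine ⟨y * y, fun n hn => ?_⟩
  set C := AddSubmonoid.closure {m : ℕ | 1 ≤ m ∧ 0 < (A ^ m) v v}
  apply closure_pos
  rcases Nat.eq_zero_or_pos y with h0 | hpos
  · subst h0
    have := nsmul_mem hy1 n
    simpa using this
  · obtain ⟨q, r, hr, hqr⟩ : ∃ q r, r < y ∧ n = q * y + r :=
      ⟨n / y, n % y, Nat.mod_lt _ hpos,
        by rw [Nat.add_comm (n / y * y)]; exact (Nat.mod_add_div' n y).symm⟩
    have hq : r ≤ q := by nlinarith
    obtain ⟨d, hd⟩ : ∃ d, q = r + d := ⟨q - r, by omega⟩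
    have : n = d * y + r * (y + 1) := by rw [hqr, hd]; ring
    rw [this]
    exact add_mem (by simpa [nsmul_eq_mul] using nsmul_mem hy d)
      (by simpa [nsmul_eq_mul] using nsmul_mem hy1 r)

theorem strongly_connected_period_one_implies_n_connected (V : Type*) [Fintype V]
    [DecidableEq V] (A : Matrix V V ℕ)
    (hsc : ∀ v w : V, ∃ m : ℕ, 1 ≤ m ∧ 0 < (A ^ m) v w)
    (hper : ∀ v : V, ∀ k : ℕ, (∀ m : ℕ, 1 ≤ m → 0 < (A ^ m) v v → k ∣ m) → k ∣ 1) :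
    ∃ n : ℕ, 1 ≤ n ∧ ∀ v w : V, 0 < (A ^ n) v w := by
  cases isEmpty_or_nonempty V with
  | inl h => exact ⟨1, le_refl 1, fun v => absurd trivial (by exact fun _ => h.elim v)⟩
  | inr h =>
    obtain ⟨v₀⟩ := h
    obtain ⟨N, hN⟩ := eventually_diag A v₀ (hper v₀)
    choose m hm1 hm2 using hsc
    set M : ℕ := Finset.univ.sup (fun p : V × V => m p.1 p.2) with hM
    refine ⟨N + 2 * M + 1, by omega, fun v w => ?_⟩
    have h1 : m v v₀ ≤ M := Finset.le_sup (f := fun p : V × V => m p.1 p.2) (Finset.mem_univ (v, v₀))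
    have h2 : m v₀ w ≤ M := Finset.le_sup (f := fun p : V × V => m p.1 p.2) (Finset.mem_univ (v₀, w))
    set k := N + 2 * M + 1 - m v v₀ - m v₀ w with hk
    have hkN : N ≤ k := by omega
    have hsum : N + 2 * M + 1 = m v v₀ + k + m v₀ w := by omega
    rw [hsum]
    exact step_pos A _ _ v v₀ w (step_pos A _ _ v v₀ v₀ (hm2 v v₀) (hN k hkN)) (hm2 v₀ w)
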